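/- Let z₀ < z₁ be real numbers and let ω : ℝ → ℝ be a polynomial function with ω > 0 on (z₀, z₁) and ω(z₀) ≠ 0; define f(z) = √((z₁ − z)(z − z₀)) · ω(z) for z ∈ (z₀, z₁). Then the meridian arc length from the pole, A(z) = ∫_{z₀}^{z} √(1 + f'(t)²) dt, satisfies lim_{z→z₀⁺} A(z)/√(z − z₀) = √(z₁ − z₀) · |ω(z₀)|. -/

import Mathlib

open Set MeasureTheory intervalIntegral Filter

/-- For the profile `f(z) = √((z₁-z)(z-z₀))·ω(z)`, the meridian arc length
`A(z) = ∫_{z₀}^z √(1 + f'(t)²) dt` satisfies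
`A(z)/√(z - z₀) → √(z₁ - z₀)·|ω(z₀)|` as `z → z₀⁺`. -/
theorem stmt7 (z₀ z₁ : ℝ) (hz : z₀ < z₁) (ω : Polynomial ℝ)
    (hωpos : ∀ z ∈ Ioo z₀ z₁, 0 < ω.eval z) (hω₀ : ω.eval z₀ ≠ 0)
    (f : ℝ → ℝ)
    (hf : ∀ z ∈ Ioo z₀ z₁, f z = Real.sqrt ((z₁ - z) * (z - z₀)) * ω.eval z)
    (A : ℝ → ℝ)
    (hA : ∀ z, A z = ∫ t in z₀..z, Real.sqrt (1 + deriv f t ^ 2)) :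
    Tendsto (fun z => A z / Real.sqrt (z - z₀)) (nhdsWithin z₀ (Ioi z₀))
      (nhds (Real.sqrt (z₁ - z₀) * |ω.eval z₀|)) := by
  classical
  set ω' : Polynomial ℝ := Polynomial.derivative ω with hω'def
  set φ : ℝ → ℝ := fun x => (z₁ + z₀ - 2*x) / (2 * Real.sqrt ((z₁ - x) * (x - z₀))) * ω.eval x
      + Real.sqrt ((z₁ - x) * (x - z₀)) * ω'.eval x with hφdef
  set G : ℝ → ℝ := fun t => Real.sqrt (1 + deriv f t ^ 2) with hGdef
  set L : ℝ := Real.sqrt (z₁ - z₀) * ω.eval z₀ / 2 with hLdef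
  set C : ℝ := Real.sqrt (z₁ - z₀) * |ω.eval z₀| with hCdef
  have hz10 : (0:ℝ) < z₁ - z₀ := sub_pos.mpr hz
  have hs0 : 0 < Real.sqrt (z₁ - z₀) := Real.sqrt_pos.mpr hz10
  -- derivative of f on the open interval
  have hfderiv : ∀ x ∈ Ioo z₀ z₁, HasDerivAt f (φ x) x := by
    intro x hx
    have hu : 0 < (z₁ - x) * (x - z₀) :=
      mul_pos (sub_pos.mpr hx.2) (sub_pos.mpr hx.1)
    have hu' : HasDerivAt (fun z => (z₁ - z) * (z - z₀)) ((-1) * (x - z₀) + (z₁ - x) * 1) x :=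
      ((hasDerivAt_id x).const_sub z₁).mul ((hasDerivAt_id x).sub_const z₀)
    have hs : HasDerivAt (fun z => Real.sqrt ((z₁ - z) * (z - z₀)))
        (1 / (2 * Real.sqrt ((z₁ - x) * (x - z₀))) * ((-1) * (x - z₀) + (z₁ - x) * 1)) x :=
      (Real.hasDerivAt_sqrt hu.ne').comp x hu'
    have hF : HasDerivAt (fun z => Real.sqrt ((z₁ - z) * (z - z₀)) * ω.eval z) (φ x) x := by
      have h := hs.mul (ω.hasDerivAt x)
      refine h.congr_deriv ?_
      simp only [hφdef, hω'def]
      ring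
    refine hF.congr_of_eventuallyEq ?_
    filter_upwards [isOpen_Ioo.mem_nhds hx] with y hy using hf y hy
  -- the key limit : √(x - z₀) * φ x → L
  have hlimh : Tendsto (fun x => Real.sqrt (x - z₀) * φ x) (nhdsWithin z₀ (Ioi z₀)) (nhds L) := by
    have hden : (2:ℝ) * Real.sqrt (z₁ - z₀) ≠ 0 := by positivity
    have hc : ContinuousAt (fun x => (z₁ + z₀ - 2*x) / (2 * Real.sqrt (z₁ - x)) * ω.eval x
        + Real.sqrt (z₁ - x) * (x - z₀) * ω'.eval x) z₀ := by
      have hsc : ContinuousAt (fun x : ℝ => Real.sqrt (z₁ - x)) z₀ :=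
        Real.continuous_sqrt.continuousAt.comp ((continuous_const.sub continuous_id).continuousAt)
      have h1 : ContinuousAt (fun x : ℝ => z₁ + z₀ - 2*x) z₀ := by fun_prop
      exact (((h1.div (continuousAt_const.mul hsc) hden).mul ω.continuous.continuousAt).add
        ((hsc.mul (continuousAt_id.sub continuousAt_const)).mul ω'.continuous.continuousAt))
    have hval : ((z₁ + z₀ - 2*z₀) / (2 * Real.sqrt (z₁ - z₀)) * ω.eval z₀
        + Real.sqrt (z₁ - z₀) * (z₀ - z₀) * ω'.eval z₀) = L := by
      have hsq : Real.sqrt (z₁ - z₀) ^ 2 = z₁ - z₀ := Real.sq_sqrt hz10.le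
      have hs0' : Real.sqrt (z₁ - z₀) ≠ 0 := ne_of_gt hs0
      have hnum : z₁ + z₀ - 2*z₀ = Real.sqrt (z₁ - z₀) ^ 2 := by rw [hsq]; ring
      rw [hLdef, hnum, sub_self, mul_zero, zero_mul, add_zero, pow_two]
      field_simp
    have htend : Tendsto (fun x => (z₁ + z₀ - 2*x) / (2 * Real.sqrt (z₁ - x)) * ω.eval x
        + Real.sqrt (z₁ - x) * (x - z₀) * ω'.eval x) (nhdsWithin z₀ (Ioi z₀)) (nhds L) := by
      rw [← hval]
      exact hc.continuousWithinAt.tendsto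
    refine htend.congr' ?_
    filter_upwards [Ioo_mem_nhdsGT_of_mem ⟨le_refl z₀, hz⟩] with x hx
    have hx1 : (0:ℝ) < z₁ - x := sub_pos.mpr hx.2
    have hx0 : (0:ℝ) < x - z₀ := sub_pos.mpr hx.1
    have hs1 : 0 < Real.sqrt (z₁ - x) := Real.sqrt_pos.mpr hx1
    have hs2 : 0 < Real.sqrt (x - z₀) := Real.sqrt_pos.mpr hx0
    have hsplit : Real.sqrt ((z₁ - x) * (x - z₀)) = Real.sqrt (z₁ - x) * Real.sqrt (x - z₀) :=
      Real.sqrt_mul hx1.le _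
    have hsq2 : Real.sqrt (x - z₀) ^ 2 = x - z₀ := Real.sq_sqrt hx0.le
    simp only [hφdef, hsplit]
    set s1 : ℝ := Real.sqrt (z₁ - x) with hs1def
    set s2 : ℝ := Real.sqrt (x - z₀) with hs2def
    have hs1' : s1 ≠ 0 := ne_of_gt hs1
    have hs2' : s2 ≠ 0 := ne_of_gt hs2
    rw [← hsq2]
    field_simp
  -- the ratio limit for L'Hôpital
  have hCnn : 0 ≤ C := mul_nonneg (Real.sqrt_nonneg _) (abs_nonneg _)
  have hratio : Tendsto (fun x => G x / (1 / (2 * Real.sqrt (x - z₀))))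
      (nhdsWithin z₀ (Ioi z₀)) (nhds C) := by
    have h4 : Tendsto (fun x => 4*(x - z₀) + 4*(Real.sqrt (x - z₀) * φ x)^2)
        (nhdsWithin z₀ (Ioi z₀)) (nhds (4*(z₀ - z₀) + 4*L^2)) := by
      have h1 : Tendsto (fun x : ℝ => 4*(x - z₀)) (nhdsWithin z₀ (Ioi z₀)) (nhds (4*(z₀ - z₀))) :=
        ((continuous_const.mul (continuous_id.sub continuous_const)).tendsto z₀).mono_left
          nhdsWithin_le_nhds
      exact h1.add ((hlimh.pow 2).const_mul 4)
    have h5 : Tendsto (fun x => Real.sqrt (4*(x - z₀) + 4*(Real.sqrt (x - z₀) * φ x)^2))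
        (nhdsWithin z₀ (Ioi z₀)) (nhds (Real.sqrt (4*(z₀ - z₀) + 4*L^2))) :=
      (Real.continuous_sqrt.tendsto _).comp h4
    have hCval : Real.sqrt (4*(z₀ - z₀) + 4*L^2) = C := by
      have : 4*(z₀ - z₀) + 4*L^2 = C^2 := by
        simp only [hLdef, hCdef, mul_pow, sq_abs]
        ring
      rw [this, Real.sqrt_sq hCnn]
    rw [hCval] at h5
    refine h5.congr' ?_
    filter_upwards [Ioo_mem_nhdsGT_of_mem ⟨le_refl z₀, hz⟩] with x hx
    have hx0 : (0:ℝ) < x - z₀ := sub_pos.mpr hx.1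
    have hs2 : 0 < Real.sqrt (x - z₀) := Real.sqrt_pos.mpr hx0
    have hsq2 : Real.sqrt (x - z₀) ^ 2 = x - z₀ := Real.sq_sqrt hx0.le
    have hdf : deriv f x = φ x := (hfderiv x hx).deriv
    have hrw : 4*(x - z₀) + 4*(Real.sqrt (x - z₀) * φ x)^2
        = (2*Real.sqrt (x - z₀))^2 * (1 + φ x ^ 2) := by
      linear_combination (-4 : ℝ) * hsq2
    rw [hrw, Real.sqrt_mul (by positivity), Real.sqrt_sq (by positivity)]
    simp only [hGdef, hdf]
    rw [div_div_eq_mul_div, div_one]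
    ring
  -- choose a small interval where the bound holds
  have hmem : {x | |Real.sqrt (x - z₀) * φ x| ≤ |L| + 1} ∩ Ioo z₀ z₁
      ∈ nhdsWithin z₀ (Ioi z₀) := by
    have h1 : {x | |Real.sqrt (x - z₀) * φ x| ≤ |L| + 1} ∈ nhdsWithin z₀ (Ioi z₀) := by
      have h2 := hlimh.eventually (eventually_abs_sub_lt L (by norm_num : (0:ℝ) < 1))
      filter_upwards [h2] with x hx
      have := abs_sub_abs_le_abs_sub (Real.sqrt (x - z₀) * φ x) L
      show |Real.sqrt (x - z₀) * φ x| ≤ |L| + 1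
      linarith [le_of_lt hx, abs_sub_comm (Real.sqrt (x - z₀) * φ x) L]
    exact inter_mem h1 (Ioo_mem_nhdsGT_of_mem ⟨le_refl z₀, hz⟩)
  obtain ⟨b, hb, hIoo⟩ := mem_nhdsGT_iff_exists_Ioo_subset.mp hmem
  have hzb : z₀ < b := hb
  set b' : ℝ := z₀ + (b - z₀)/2 with hb'def
  have hz₀b' : z₀ < b' := by rw [hb'def]; linarith
  have hb'b : b' < b := by rw [hb'def]; linarith
  set M : ℝ := |L| + 1 with hMdef
  have hM0 : 0 < M := by positivity
  -- measurability
  have hGmeas : Measurable G := by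
    have h1 : Measurable (deriv f) := measurable_deriv f
    exact (measurable_const.add (h1.pow_const 2)).sqrt
  -- integrability of the dominating function
  set B : ℝ → ℝ := fun t => 1 + M * (t - z₀) ^ (-(1/2) : ℝ) with hBdef
  have hBint : IntervalIntegrable B volume z₀ b' := by
    have h1 : IntervalIntegrable (fun t : ℝ => t ^ (-(1/2):ℝ)) volume 0 (b' - z₀) :=
      intervalIntegrable_rpow' (by norm_num)
    have h2 := h1.comp_sub_right z₀
    have h3 : IntervalIntegrable (fun t : ℝ => (t - z₀) ^ (-(1/2):ℝ)) volume z₀ b' := by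
      simpa using h2
    simpa only [hBdef] using intervalIntegrable_const.add (h3.const_mul M)
  -- integrability of G
  have hGint : IntervalIntegrable G volume z₀ b' := by
    refine hBint.mono_fun hGmeas.aestronglyMeasurable.restrict ?_
    have hsub : uIoc z₀ b' ⊆ Ioo z₀ b := by
      rw [uIoc_of_le hz₀b'.le]
      exact fun t ht => ⟨ht.1, lt_of_le_of_lt ht.2 hb'b⟩
    refine (ae_restrict_iff' measurableSet_uIoc).mpr (Eventually.of_forall fun t ht => ?_)
    have htm := hIoo (hsub ht)
    have ht0 : (0:ℝ) < t - z₀ := sub_pos.mpr (hsub ht).1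
    have hst : 0 < Real.sqrt (t - z₀) := Real.sqrt_pos.mpr ht0
    have hdf : deriv f t = φ t := (hfderiv t htm.2).deriv
    have hrpow : (t - z₀) ^ (-(1/2):ℝ) = (Real.sqrt (t - z₀))⁻¹ := by
      rw [Real.rpow_neg ht0.le, Real.sqrt_eq_rpow]
    have hφb : |φ t| ≤ M * (t - z₀) ^ (-(1/2):ℝ) := by
      have h1 : Real.sqrt (t - z₀) * |φ t| ≤ M := by
        have h0 : |Real.sqrt (t - z₀) * φ t| ≤ M := htm.1
        rwa [abs_mul, abs_of_nonneg (Real.sqrt_nonneg _)] at h0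
      rw [hrpow, ← div_eq_mul_inv, le_div_iff₀ hst]
      calc |φ t| * Real.sqrt (t - z₀) = Real.sqrt (t - z₀) * |φ t| := by ring
        _ ≤ M := h1
    have hGle : G t ≤ B t := by
      have h2 : G t ≤ 1 + |φ t| := by
        simp only [hGdef, hdf]
        have h3 : (1:ℝ) + φ t ^ 2 ≤ (1 + |φ t|)^2 := by
          nlinarith [abs_nonneg (φ t), sq_abs (φ t)]
        calc Real.sqrt (1 + φ t ^ 2) ≤ Real.sqrt ((1 + |φ t|)^2) := Real.sqrt_le_sqrt h3
          _ = 1 + |φ t| := Real.sqrt_sq (by positivity)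
      simp only [hBdef]
      linarith
    have hG0 : 0 ≤ G t := Real.sqrt_nonneg _
    have hB0 : 0 ≤ B t := le_trans hG0 hGle
    simp only [Real.norm_eq_abs, abs_of_nonneg hG0, abs_of_nonneg hB0]
    exact hGle
  -- membership of points of Ioo z₀ b' in Ioo z₀ z₁
  have hb'z₁ : ∀ x ∈ Ioo z₀ b', x ∈ Ioo z₀ z₁ := fun x hx =>
    (hIoo ⟨hx.1, lt_trans hx.2 hb'b⟩).2
  -- A is differentiable with derivative G on Ioo z₀ b'
  have hAderiv : ∀ x ∈ Ioo z₀ b', HasDerivAt A (G x) x := by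
    intro x hx
    have hint : IntervalIntegrable G volume z₀ x := by
      refine hGint.mono_set ?_
      rw [uIcc_of_le hz₀b'.le, uIcc_of_le hx.1.le]
      exact Icc_subset_Icc le_rfl hx.2.le
    have hxz₁ := hb'z₁ x hx
    have hcont : ContinuousAt G x := by
      have hu : 0 < (z₁ - x) * (x - z₀) :=
        mul_pos (sub_pos.mpr hxz₁.2) (sub_pos.mpr hxz₁.1)
      have hden : 2 * Real.sqrt ((z₁ - x) * (x - z₀)) ≠ 0 :=
        mul_ne_zero two_ne_zero (ne_of_gt (Real.sqrt_pos.mpr hu))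
      have hsu : ContinuousAt (fun y : ℝ => Real.sqrt ((z₁ - y) * (y - z₀))) x :=
        Real.continuous_sqrt.continuousAt.comp (by fun_prop)
      have hφc : ContinuousAt φ x := by
        refine ContinuousAt.add ?_ (hsu.mul ω'.continuous.continuousAt)
        exact ContinuousAt.mul
          (ContinuousAt.div (by fun_prop) (continuousAt_const.mul hsu) hden)
          ω.continuous.continuousAt
      have hψc : ContinuousAt (fun t => Real.sqrt (1 + φ t ^ 2)) x :=
        Real.continuous_sqrt.continuousAt.comp (continuousAt_const.add (hφc.pow 2))
      refine hψc.congr ?_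
      filter_upwards [isOpen_Ioo.mem_nhds hxz₁] with t ht
      simp only [hGdef, (hfderiv t ht).deriv]
    have hstrong : StronglyMeasurableAtFilter G (nhds x) volume :=
      ⟨univ, univ_mem, hGmeas.aestronglyMeasurable.restrict⟩
    have h := intervalIntegral.integral_hasDerivAt_right hint hstrong hcont
    exact h.congr_of_eventuallyEq (Eventually.of_forall hA)
  -- derivative of the denominator
  have hgderiv : ∀ x ∈ Ioo z₀ b',
      HasDerivAt (fun z => Real.sqrt (z - z₀)) (1 / (2 * Real.sqrt (x - z₀))) x := by
    intro x hx
    have h := (Real.hasDerivAt_sqrt (ne_of_gt (sub_pos.mpr hx.1))).comp x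
      ((hasDerivAt_id x).sub_const z₀)
    exact h.congr_deriv (mul_one _)
  have hg'ne : ∀ x ∈ Ioo z₀ b', (1 / (2 * Real.sqrt (x - z₀)) : ℝ) ≠ 0 := by
    intro x hx
    have : 0 < Real.sqrt (x - z₀) := Real.sqrt_pos.mpr (sub_pos.mpr hx.1)
    positivity
  -- A → 0
  have hA0 : Tendsto A (nhdsWithin z₀ (Ioi z₀)) (nhds 0) := by
    have hcontA := intervalIntegral.continuousOn_primitive_interval' hGint
      (left_mem_uIcc (a := z₀) (b := b'))
    have h1 : ContinuousWithinAt (fun u => ∫ x in z₀..u, G x) (uIcc z₀ b') z₀ :=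
      hcontA z₀ left_mem_uIcc
    have h2 : Tendsto (fun u => ∫ x in z₀..u, G x) (nhdsWithin z₀ (uIcc z₀ b')) (nhds 0) := by
      have := h1.tendsto
      rwa [intervalIntegral.integral_same] at this
    have h3 : nhdsWithin z₀ (Ioi z₀) = nhdsWithin z₀ (Ioo z₀ b') :=
      (nhdsWithin_Ioo_eq_nhdsGT hz₀b').symm
    have h4 : Tendsto (fun u => ∫ x in z₀..u, G x) (nhdsWithin z₀ (Ioi z₀)) (nhds 0) := by
      rw [h3]
      refine h2.mono_left (nhdsWithin_mono z₀ ?_)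
      rw [uIcc_of_le hz₀b'.le]
      exact Ioo_subset_Icc_self
    exact h4.congr fun z => (hA z).symm
  -- √(z - z₀) → 0
  have hg0 : Tendsto (fun z => Real.sqrt (z - z₀)) (nhdsWithin z₀ (Ioi z₀)) (nhds 0) := by
    have h1 : Tendsto (fun z : ℝ => Real.sqrt (z - z₀)) (nhds z₀) (nhds (Real.sqrt (z₀ - z₀))) :=
      (Real.continuous_sqrt.comp (continuous_id.sub continuous_const)).tendsto z₀
    simp only [sub_self, Real.sqrt_zero] at h1
    exact h1.mono_left nhdsWithin_le_nhds
  -- L'Hôpital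
  exact HasDerivAt.lhopital_zero_right_on_Ioo hz₀b' hAderiv hgderiv hg'ne hA0 hg0 hratio
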